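/- For every even integer p ≥ 2 there exist θ ∈ (0,1) and α₂ > 0 such that (1−θ+θα₂)²·(1−θ+α₂)^{p−1} / (α₂^{p−1}·(1+(1−θ)α₂)^{p}) − (1−θ)/α₂^{2p−1} − (θα₂)² > 0 and (1−θ+α₂)^{p} / (α₂^{p}·(1+(1−θ)α₂)^{p−1}) − 1 − (1−θ)/α₂^{2p−1} < 0. -/

import Mathlib

set_option maxHeartbeats 1000000 in


/-- For every even integer `p ≥ 2` there exist `θ ∈ (0,1)` and `α₂ > 0` making the
`(1,1)` entry of the difference matrix `𝒟^{(2p)}` positive and its `(2,2)` entry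
negative. -/
theorem higherOrder_difference_changes_sign (p : ℕ) (hp : 2 ≤ p) (hpe : Even p) :
    ∃ θ α₂ : ℝ, θ ∈ Set.Ioo (0 : ℝ) 1 ∧ 0 < α₂ ∧
      0 < (1 - θ + θ * α₂) ^ 2 * (1 - θ + α₂) ^ (p - 1) /
            (α₂ ^ (p - 1) * (1 + (1 - θ) * α₂) ^ p)
          - (1 - θ) / α₂ ^ (2 * p - 1) - (θ * α₂) ^ 2 ∧
      (1 - θ + α₂) ^ p / (α₂ ^ p * (1 + (1 - θ) * α₂) ^ (p - 1))
          - 1 - (1 - θ) / α₂ ^ (2 * p - 1) < 0 := by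
  obtain ⟨q, rfl⟩ : ∃ q, p = q + 1 := ⟨p - 1, by omega⟩
  have hq : 1 ≤ q := by omega
  clear hp hpe
  set x : ℝ := 2 ^ q with hxdef
  have hxpos : (0:ℝ) < x := by positivity
  have hx2 : (2:ℝ) ≤ x := by
    rw [hxdef]
    calc (2:ℝ) = 2 ^ 1 := (pow_one 2).symm
    _ ≤ 2 ^ q := pow_le_pow_right₀ one_le_two hq
  set t : ℝ := (8 * x ^ 3)⁻¹ with htdef
  have ht0 : 0 < t := by positivity
  clear_value t
  clear_value x
  have ht64 : t ≤ 1 / 64 := by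
    rw [htdef, inv_le_comm₀ (by positivity) (by norm_num)]
    norm_num
    have hx4 : (4:ℝ) ≤ x ^ 2 := by nlinarith
    nlinarith
  have htq : (q : ℝ) * t ≤ 1 / 32 := by
    have hqx : (q : ℝ) ≤ x := by
      rw [hxdef]
      have := Nat.lt_two_pow_self (n := q)
      exact_mod_cast this.le
    rw [htdef, mul_inv_le_iff₀ (by positivity)]
    have hx4 : (4:ℝ) ≤ x ^ 2 := by nlinarith
    nlinarith
  have e1 : (2:ℝ) ^ (2 * q + 1) = 2 * x ^ 2 := by rw [hxdef]; ring
  have e2 : (2:ℝ) ^ (q + 1) = 2 * x := by rw [hxdef]; ring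
  refine ⟨t, 2, ⟨ht0, by linarith⟩, by norm_num, ?_, ?_⟩
  · -- first (positivity) goal
    simp only [Nat.add_sub_cancel]
    have h2q1 : 2 * (q + 1) - 1 = 2 * q + 1 := by omega
    rw [h2q1]
    have hd3 : (0:ℝ) < 1 + (1 - t) * 2 := by linarith
    have hF : 1 / (3 * x) ≤ (1 - t + t * 2) ^ 2 * (1 - t + 2) ^ q /
        ((2:ℝ) ^ q * (1 + (1 - t) * 2) ^ (q + 1)) := by
      rw [← hxdef, div_le_div_iff₀ (by positivity) (by positivity), pow_succ]
      have hpow : (1 + (1 - t) * 2) ^ q ≤ (1 - t + 2) ^ q :=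
        pow_le_pow_left₀ (by linarith) (by linarith) q
      have h1 : x * (1 + (1 - t) * 2) ^ q ≤ x * (1 - t + 2) ^ q :=
        mul_le_mul_of_nonneg_left hpow hxpos.le
      have h2 : (1 + (1 - t) * 2) ≤ 3 * (1 - t + t * 2) ^ 2 := by nlinarith
      have h3 := mul_le_mul h1 h2 (by linarith)
        (mul_nonneg hxpos.le (pow_nonneg (by linarith) q))
      nlinarith [h3]
    have hB : (1 - t) / (2:ℝ) ^ (2 * q + 1) ≤ 1 / (4 * x) := by
      rw [e1]
      apply div_le_div₀ (by positivity) (by linarith) (by positivity)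
      nlinarith
    have hC : (t * 2) ^ 2 ≤ 1 / (16 * x) := by
      have hC1 : (t * 2) ^ 2 = 1 / (16 * x ^ 6) := by
        rw [htdef]; field_simp; ring
      rw [hC1]
      apply div_le_div₀ (by norm_num) le_rfl (by positivity)
      nlinarith [pow_le_pow_right₀ (by linarith : (1:ℝ) ≤ x) (by norm_num : 1 ≤ 6),
        pow_pos hxpos 6]
    have hfin : 1 / (4 * x) + 1 / (16 * x) < 1 / (3 * x) := by
      rw [div_add_div _ _ (by positivity) (by positivity),
        div_lt_div_iff₀ (by positivity) (by positivity)]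
      nlinarith
    linarith
  · -- second (negativity) goal
    simp only [Nat.add_sub_cancel]
    have h2q1 : 2 * (q + 1) - 1 = 2 * q + 1 := by omega
    rw [h2q1]
    have hd3 : (0:ℝ) < 1 + (1 - t) * 2 := by linarith
    have hpos : 0 < (1 - t) / (2:ℝ) ^ (2 * q + 1) := by
      apply div_pos (by linarith) (by positivity)
    have hT : (1 - t + 2) ^ (q + 1) / ((2:ℝ) ^ (q + 1) * (1 + (1 - t) * 2) ^ q)
        ≤ 36 / 47 := by
      rw [div_le_iff₀ (by positivity)]
      have hb : (47 / 48 : ℝ) ≤ (1 - 2 * t / 3) ^ q := by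
        have hber := one_add_mul_le_pow (show (-2:ℝ) ≤ -(2 * t / 3) by linarith) q
        have e : (1 + -(2 * t / 3)) = 1 - 2 * t / 3 := by ring
        rw [e] at hber
        nlinarith [htq]
      have hd : (3:ℝ) ^ q * (47 / 48) ≤ (1 + (1 - t) * 2) ^ q := by
        have e : (1 + (1 - t) * 2) = 3 * (1 - 2 * t / 3) := by ring
        rw [e, mul_pow]
        exact mul_le_mul_of_nonneg_left hb (by positivity)
      have hn : (1 - t + 2) ^ (q + 1) ≤ 3 * 3 ^ q := by
        calc (1 - t + 2) ^ (q + 1) ≤ 3 ^ (q + 1) :=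
              pow_le_pow_left₀ (by linarith) (by linarith) _
        _ = 3 * 3 ^ q := by rw [pow_succ]; ring
      have h4 : (4:ℝ) ≤ 2 ^ (q + 1) := by
        calc (4:ℝ) = 2 ^ 2 := by norm_num
        _ ≤ 2 ^ (q + 1) := pow_le_pow_right₀ one_le_two (by omega)
      have hmul := mul_le_mul h4 hd (by positivity) (by positivity)
      linarith
    linarith
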